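/- Let the sequence e be defined by e_1=3, e_2=11, e_3=19, e_4=27 and for i ≥ 1: e_{4i+1}=4e_{4i}-e_{4i-1}, e_{4i+2}=4e_{4i+1}-e_{4i}, e_{4i+3}=2e_{4i+2}-e_{4i+1}, e_{4i+4}=2e_{4i+3}-e_{4i+2}. Then e_5=89, e_6=329, e_7=569, e_8=809, and for all i ≥ 2, e_{4i+4} = 30·e_{4(i-1)+4} - e_{4(i-2)+4}. -/
import Mathlib


theorem stmt_18 (e : ℕ → ℤ)
    (h1 : e 1 = 3) (h2 : e 2 = 11) (h3 : e 3 = 19) (h4 : e 4 = 27)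
    (hr1 : ∀ i : ℕ, 1 ≤ i → e (4*i+1) = 4 * e (4*i) - e (4*i-1))
    (hr2 : ∀ i : ℕ, 1 ≤ i → e (4*i+2) = 4 * e (4*i+1) - e (4*i))
    (hr3 : ∀ i : ℕ, 1 ≤ i → e (4*i+3) = 2 * e (4*i+2) - e (4*i+1))
    (hr4 : ∀ i : ℕ, 1 ≤ i → e (4*i+4) = 2 * e (4*i+3) - e (4*i+2)) :
    e 5 = 89 ∧ e 6 = 329 ∧ e 7 = 569 ∧ e 8 = 809 ∧
    ∀ i : ℕ, 2 ≤ i → e (4*i+4) = 30 * e (4*(i-1)+4) - e (4*(i-2)+4) := by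
  have a1 := hr1 1 le_rfl
  have a2 := hr2 1 le_rfl
  have a3 := hr3 1 le_rfl
  have a4 := hr4 1 le_rfl
  norm_num at a1 a2 a3 a4
  refine ⟨by omega, by omega, by omega, by omega, ?_⟩
  intro i hi
  obtain ⟨j, rfl⟩ : ∃ j, i = j + 2 := ⟨i - 2, by omega⟩
  have b1 := hr1 (j + 2) (by omega)
  have b2 := hr2 (j + 2) (by omega)
  have b3 := hr3 (j + 2) (by omega)
  have b4 := hr4 (j + 2) (by omega)
  have c1 := hr1 (j + 1) (by omega)
  have c2 := hr2 (j + 1) (by omega)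
  have c3 := hr3 (j + 1) (by omega)
  have c4 := hr4 (j + 1) (by omega)
  have e1 : 4 * (j + 2) - 1 = 4 * (j + 1) + 3 := by omega
  have e2 : 4 * (j + 1) + 4 = 4 * (j + 2) := by omega
  rw [e1] at b1
  rw [e2] at c4
  simp only [show j + 2 - 1 = j + 1 from rfl, show j + 2 - 2 = j from rfl]
  rw [show 4 * j + 4 = 4 * (j + 1) from by ring, e2]
  omega
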